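/- Let X be a metric space and V a finite-dimensional normed space, and let Z ⊆ X be a finite subset with |Z| = k. Suppose K ≥ 0 is such that for every finite set Z̃ with Z ⊆ Z̃ ⊆ X, every map f : Z → V admits an extension f̃ : Z̃ → V with ‖f̃‖_Lip ≤ K‖f‖_Lip. Then every Lipschitz map f : Z → V admits an extension f̂ : X → V with ‖f̂‖_Lip ≤ K‖f‖_Lip. -/

import Mathlib

open scoped NNReal

open Filter Metric in
theorem stmt9 {X V : Type*} [MetricSpace X] [NormedAddCommGroup V] [NormedSpace ℝ V]
    [FiniteDimensional ℝ V] (k : ℕ) (Z : Set X) (hZfin : Z.Finite) (hZk : Z.ncard = k)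
    (K : ℝ≥0)
    (hext : ∀ Z' : Set X, Z'.Finite → Z ⊆ Z' →
      ∀ (f : Z → V) (C : ℝ≥0), LipschitzWith C f →
        ∃ g : Z' → V, (∀ (z : Z') (hz : (z : X) ∈ Z), g z = f ⟨z, hz⟩) ∧
          LipschitzWith (K * C) g) :
    ∀ (f : Z → V) (C : ℝ≥0), LipschitzWith C f →
      ∃ g : X → V, (∀ z : Z, g z = f z) ∧ LipschitzWith (K * C) g := by
  intro f C hf
  rcases Z.eq_empty_or_nonempty with hZ | ⟨z₀, hz₀⟩
  · refine ⟨fun _ => 0, ?_, (LipschitzWith.const 0).weaken zero_le⟩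
    rintro ⟨z, hz⟩
    simp [hZ] at hz
  · classical
    have hch : ∀ F : Finset X, ∃ g : (Z ∪ ↑F : Set X) → V,
        (∀ (z : (Z ∪ ↑F : Set X)) (hz : (z : X) ∈ Z), g z = f ⟨z, hz⟩) ∧
        LipschitzWith (K * C) g :=
      fun F => hext _ (hZfin.union F.finite_toSet) Set.subset_union_left f C hf
    choose G hG1 hG2 using hch
    set h : Finset X → X → V := fun F x =>
      if hx : x ∈ (Z ∪ ↑F : Set X) then G F ⟨x, hx⟩ else f ⟨z₀, hz₀⟩ with hh
    have hmem : ∀ F x, h F x ∈ closedBall (f ⟨z₀, hz₀⟩) ((K * C : ℝ≥0) * dist x z₀) := by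
      intro F x
      rw [mem_closedBall]
      by_cases hx : x ∈ (Z ∪ ↑F : Set X)
      · have hz0 : (z₀ : X) ∈ (Z ∪ ↑F : Set X) := Set.subset_union_left hz₀
        have hd := (hG2 F).dist_le_mul ⟨x, hx⟩ ⟨z₀, hz0⟩
        rw [hG1 F ⟨z₀, hz0⟩ hz₀, Subtype.dist_eq] at hd
        simp only [hh]
        rw [dif_pos hx]
        exact_mod_cast hd
      · simp only [hh, dif_neg hx, dist_self]
        positivity
    let U : Ultrafilter (Finset X) := Ultrafilter.of atTop
    have hU : (U : Filter (Finset X)) ≤ atTop := Ultrafilter.of_le _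
    have hlim : ∀ x : X, ∃ v, Tendsto (fun F => h F x) U (nhds v) := by
      intro x
      obtain ⟨v, -, hv⟩ :=
        (isCompact_closedBall (f ⟨z₀, hz₀⟩) ((K * C : ℝ≥0) * dist x z₀)).ultrafilter_le_nhds
          (U.map fun F => h F x)
          (le_principal_iff.2 (mem_map.2 (univ_mem' fun F => hmem F x)))
      exact ⟨v, hv⟩
    choose g hg using hlim
    refine ⟨g, ?_, ?_⟩
    · intro z
      have hconst : Tendsto (fun F : Finset X => h F (z : X)) U (nhds (f z)) := by
        have : ∀ F : Finset X, h F (z : X) = f z := by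
          intro F
          have hz : (z : X) ∈ (Z ∪ ↑F : Set X) := Set.subset_union_left z.2
          simp [hh, hz, hG1 F ⟨z, hz⟩ z.2]
        simp only [this]
        exact tendsto_const_nhds
      exact tendsto_nhds_unique (hg z) hconst
    · refine LipschitzWith.of_dist_le_mul fun x y => ?_
      have hev : ∀ᶠ F in (U : Filter (Finset X)),
          dist (h F x) (h F y) ≤ (K * C : ℝ≥0) * dist x y := by
        refine hU (eventually_atTop.2 ⟨{x, y}, fun F hF => ?_⟩)
        have hx : x ∈ (Z ∪ ↑F : Set X) := Or.inr (hF (by simp))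
        have hy : y ∈ (Z ∪ ↑F : Set X) := Or.inr (hF (by simp))
        have hd := (hG2 F).dist_le_mul ⟨x, hx⟩ ⟨y, hy⟩
        rw [Subtype.dist_eq] at hd
        simp only [hh]
        rw [dif_pos hx, dif_pos hy]
        exact_mod_cast hd
      exact le_of_tendsto ((hg x).dist (hg y)) hev
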